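/- Let α, β, γ, c₁, c₂, c₃ be positive real constants with α ≥ min(β, γ) and β = γ. Then there exists a constant c₄ > 0 such that for every TOL ∈ (0, e⁻¹) there exist a level L ∈ ℕ and positive integers M₀, M₁, …, M_L satisfying both c₁²·2^(−2αL) + Σ_{ℓ=0}^{L} c₂·2^(−βℓ)/M_ℓ ≤ TOL² and Σ_{ℓ=0}^{L} M_ℓ·c₃·2^(γℓ) ≤ c₄·TOL^(−2)·(log TOL)². -/

import Mathlib

open Filter Finset

set_option maxHeartbeats 1000000 in
/-- MLMC complexity theorem, deterministic core, case `β = γ`. -/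
theorem mlmc_complexity_beta_eq_gamma
    (α β γ c₁ c₂ c₃ : ℝ)
    (hα : 0 < α) (hβ : 0 < β) (hγ : 0 < γ)
    (hc₁ : 0 < c₁) (hc₂ : 0 < c₂) (hc₃ : 0 < c₃)
    (hαmin : α ≥ min β γ) (hβγ : β = γ) :
    ∃ c₄ > (0 : ℝ), ∀ TOL : ℝ, 0 < TOL → TOL < Real.exp (-1) →
      ∃ (L : ℕ) (M : ℕ → ℕ),
        (∀ ℓ ≤ L, 0 < M ℓ) ∧
        c₁ ^ 2 * (2 : ℝ) ^ (-(2 * α * (L : ℝ)))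
            + ∑ ℓ ∈ Finset.range (L + 1), c₂ * (2 : ℝ) ^ (-(β * (ℓ : ℝ))) / (M ℓ : ℝ)
          ≤ TOL ^ 2 ∧
        ∑ ℓ ∈ Finset.range (L + 1), (M ℓ : ℝ) * c₃ * (2 : ℝ) ^ (γ * (ℓ : ℝ))
          ≤ c₄ * TOL ^ (-2 : ℝ) * (Real.log TOL) ^ 2 := by
  subst hβγ
  have hαβ : β ≤ α := by simpa using hαmin
  have hlg2 : 0 < Real.log 2 := Real.log_pos one_lt_two
  have hs2 : (0:ℝ) < Real.sqrt 2 := Real.sqrt_pos.mpr (by norm_num)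
  set K := max 0 (Real.log (Real.sqrt 2 * c₁)) with hKdef
  have hK0 : 0 ≤ K := le_max_left _ _
  set A := (K + 1) / (α * Real.log 2) + 2 with hAdef
  have hA0 : 0 < A := by positivity
  set B := (Real.sqrt 2 * c₁ + 1) * (2:ℝ) ^ β with hBdef
  have hB0 : 0 < B := by positivity
  refine ⟨2*c₂*c₃*A^2 + c₃*A*B, by positivity, ?_⟩
  intro t ht hte
  have ht1 : t < 1 := lt_trans hte (by
    have : Real.exp (-1) < Real.exp 0 := Real.exp_lt_exp.mpr (by norm_num)
    simpa using this)
  have hU1 : 1 ≤ -Real.log t := by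
    have : Real.log t < Real.log (Real.exp (-1)) := Real.log_lt_log ht hte
    rw [Real.log_exp] at this; linarith
  set U := -Real.log t with hUdef
  have hU0 : 0 < U := lt_of_lt_of_le one_pos hU1
  set X := Real.log (Real.sqrt 2 * c₁ / t) with hXdef
  have hXeq : X = Real.log (Real.sqrt 2 * c₁) + U := by
    rw [hXdef, Real.log_div (by positivity) ht.ne', hUdef]; ring
  have hexpX : Real.exp X = Real.sqrt 2 * c₁ / t := Real.exp_log (by positivity)
  set L := ⌈X / (α * Real.log 2)⌉₊ with hLdef
  have hαlg : 0 < α * Real.log 2 := by positivity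
  -- lower bound on L
  have hL_lb : X ≤ α * Real.log 2 * (L : ℝ) := by
    have h := Nat.le_ceil (X / (α * Real.log 2))
    rw [div_le_iff₀ hαlg] at h
    linarith [h]
  -- upper bound on L
  have hL_ub : (L : ℝ) ≤ max 0 (X / (α * Real.log 2)) + 1 := by
    have h1 : (L : ℝ) ≤ (⌈max 0 (X / (α * Real.log 2))⌉₊ : ℝ) := by
      exact_mod_cast Nat.ceil_mono (le_max_right _ _)
    have h2 := Nat.ceil_lt_add_one (le_max_left 0 (X / (α * Real.log 2)))
    linarith
  clear_value L
  have hmax_eq : max 0 (X / (α * Real.log 2)) * (α * Real.log 2) = max 0 X := by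
    rcases le_or_gt X 0 with h | h
    · rw [max_eq_left (div_nonpos_of_nonpos_of_nonneg h hαlg.le), max_eq_left h]
      ring
    · rw [max_eq_right (by positivity), max_eq_right h.le]
      field_simp
  have hmaxX_le : max 0 X ≤ K + U := by
    have : X ≤ K + U := by
      rw [hXeq]
      have := le_max_right (0:ℝ) (Real.log (Real.sqrt 2 * c₁)); linarith
    exact max_le (by positivity) this
  -- L + 1 ≤ A * U
  have hL1 : (L : ℝ) + 1 ≤ A * U := by
    have h1 : max 0 (X / (α * Real.log 2)) ≤ (K + U) / (α * Real.log 2) := by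
      rw [← hmax_eq] at hmaxX_le
      calc max 0 (X / (α * Real.log 2))
          = max 0 (X / (α * Real.log 2)) * (α * Real.log 2) / (α * Real.log 2) := by
            field_simp
        _ ≤ (K + U) / (α * Real.log 2) := by gcongr
    have h2 : (K + U) / (α * Real.log 2) ≤ (K + 1) * U / (α * Real.log 2) := by
      gcongr
      nlinarith [mul_nonneg hK0 (sub_nonneg.mpr hU1)]
    have h3 : ((K + 1) / (α * Real.log 2) + 2) * U
        = (K + 1) * U / (α * Real.log 2) + 2 * U := by ring
    rw [hAdef, h3]
    linarith [hL_ub, h1, h2, hU1]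
  have hrpow : ∀ x : ℝ, (2:ℝ) ^ x = Real.exp (x * Real.log 2) := fun x => by
    rw [Real.rpow_def_of_pos two_pos, mul_comm]
  -- 2^(β L) ≤ B / t
  have h2L : (2:ℝ) ^ (β * (L : ℝ)) ≤ B / t := by
    have hexp_le : β * (L:ℝ) * Real.log 2 ≤ max 0 X + β * Real.log 2 := by
      have h1 : (L:ℝ) * (β * Real.log 2)
          ≤ (max 0 (X / (α * Real.log 2)) + 1) * (β * Real.log 2) := by
        apply mul_le_mul_of_nonneg_right hL_ub (by positivity)
      have h2 : max 0 (X / (α * Real.log 2)) * (β * Real.log 2)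
          ≤ max 0 (X / (α * Real.log 2)) * (α * Real.log 2) := by
        exact mul_le_mul_of_nonneg_left (mul_le_mul_of_nonneg_right hαβ hlg2.le) (le_max_left _ _)
      rw [hmax_eq] at h2
      nlinarith [h1, h2]
    have hstep : (2:ℝ) ^ (β * (L : ℝ)) ≤ Real.exp (max 0 X) * (2:ℝ) ^ β := by
      rw [hrpow, hrpow]
      rw [← Real.exp_add]
      exact Real.exp_le_exp.mpr hexp_le
    have hmx : Real.exp (max 0 X) ≤ Real.sqrt 2 * c₁ / t + 1 := by
      rcases le_or_gt X 0 with h | h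
      · rw [max_eq_left h, Real.exp_zero]
        have : (0:ℝ) < Real.sqrt 2 * c₁ / t := by positivity
        linarith
      · rw [max_eq_right h.le, hexpX]; linarith
    have h1t : (1:ℝ) ≤ 1 / t := by rw [le_div_iff₀ ht]; linarith
    calc (2:ℝ) ^ (β * (L : ℝ)) ≤ Real.exp (max 0 X) * (2:ℝ) ^ β := hstep
      _ ≤ (Real.sqrt 2 * c₁ / t + 1 / t) * (2:ℝ) ^ β := by
          have h2b : (0:ℝ) < (2:ℝ) ^ β := Real.rpow_pos_of_pos two_pos β
          exact mul_le_mul_of_nonneg_right (by linarith) h2b.le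
      _ = B / t := by rw [hBdef]; ring
  -- bias bound
  have hbias : c₁ ^ 2 * (2:ℝ) ^ (-(2 * α * (L : ℝ))) ≤ t ^ 2 / 2 := by
    have hb1 : (2:ℝ) ^ (-(2 * α * (L : ℝ))) ≤ Real.exp (-(2 * X)) := by
      rw [hrpow]
      apply Real.exp_le_exp.mpr
      have h := hL_lb
      ring_nf
      ring_nf at h
      linarith
    have hb2 : Real.exp (-(2 * X)) = (Real.sqrt 2 * c₁ / t)⁻¹ * (Real.sqrt 2 * c₁ / t)⁻¹ := by
      rw [show -(2 * X) = -X + -X by ring, Real.exp_add, Real.exp_neg, hexpX]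
    have hval : c₁ ^ 2 * ((Real.sqrt 2 * c₁ / t)⁻¹ * (Real.sqrt 2 * c₁ / t)⁻¹) = t ^ 2 / 2 := by
      have hsq : Real.sqrt 2 * Real.sqrt 2 = 2 := Real.mul_self_sqrt (by norm_num)
      rw [inv_div, div_mul_div_comm]
      have hd : Real.sqrt 2 * c₁ * (Real.sqrt 2 * c₁) = 2 * c₁ ^ 2 := by
        linear_combination (c₁ ^ 2) * hsq
      rw [hd]
      field_simp
    calc c₁ ^ 2 * (2:ℝ) ^ (-(2 * α * (L : ℝ)))
        ≤ c₁ ^ 2 * Real.exp (-(2 * X)) := mul_le_mul_of_nonneg_left hb1 (sq_nonneg c₁)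
      _ = t ^ 2 / 2 := by rw [hb2]; exact hval
  -- the sample numbers
  set Marg : ℕ → ℝ := fun ℓ => 2 * c₂ * ((L:ℝ) + 1) * (2:ℝ) ^ (-(β * (ℓ:ℝ))) / t ^ 2
    with hMargdef
  have hMargpos : ∀ ℓ : ℕ, 0 < Marg ℓ := by
    intro ℓ
    have : (0:ℝ) < (2:ℝ) ^ (-(β * (ℓ:ℝ))) := Real.rpow_pos_of_pos two_pos _
    rw [hMargdef]
    positivity
  refine ⟨L, fun ℓ => ⌈Marg ℓ⌉₊, ?_, ?_, ?_⟩
  · intro ℓ _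
    exact Nat.ceil_pos.mpr (hMargpos ℓ)
  · -- error bound
    have hvar : ∑ ℓ ∈ Finset.range (L + 1),
        c₂ * (2:ℝ) ^ (-(β * (ℓ:ℝ))) / ((⌈Marg ℓ⌉₊ : ℕ) : ℝ) ≤ t ^ 2 / 2 := by
      have hterm : ∀ ℓ ∈ Finset.range (L + 1),
          c₂ * (2:ℝ) ^ (-(β * (ℓ:ℝ))) / ((⌈Marg ℓ⌉₊ : ℕ) : ℝ) ≤ t ^ 2 / (2 * ((L:ℝ) + 1)) := by
        intro ℓ _
        have hp : (0:ℝ) < (2:ℝ) ^ (-(β * (ℓ:ℝ))) := Real.rpow_pos_of_pos two_pos _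
        have hle : Marg ℓ ≤ ((⌈Marg ℓ⌉₊ : ℕ) : ℝ) := Nat.le_ceil _
        have h1 : c₂ * (2:ℝ) ^ (-(β * (ℓ:ℝ))) / ((⌈Marg ℓ⌉₊ : ℕ) : ℝ)
            ≤ c₂ * (2:ℝ) ^ (-(β * (ℓ:ℝ))) / Marg ℓ := by
          have hmp := hMargpos ℓ
          gcongr
        have h2 : c₂ * (2:ℝ) ^ (-(β * (ℓ:ℝ))) / Marg ℓ = t ^ 2 / (2 * ((L:ℝ) + 1)) := by
          rw [hMargdef]
          have hL1' : (0:ℝ) < (L:ℝ) + 1 := by positivity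
          field_simp
        rw [h2] at h1; exact h1
      calc ∑ ℓ ∈ Finset.range (L + 1), c₂ * (2:ℝ) ^ (-(β * (ℓ:ℝ))) / ((⌈Marg ℓ⌉₊ : ℕ) : ℝ)
          ≤ ∑ _ℓ ∈ Finset.range (L + 1), t ^ 2 / (2 * ((L:ℝ) + 1)) :=
            Finset.sum_le_sum hterm
        _ = ((L:ℝ) + 1) * (t ^ 2 / (2 * ((L:ℝ) + 1))) := by
            rw [Finset.sum_const, Finset.card_range]
            push_cast; ring
        _ = t ^ 2 / 2 := by
            have : ((L:ℝ) + 1) ≠ 0 := by positivity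
            field_simp
    linarith [hbias, hvar]
  · -- cost bound
    have hterm : ∀ ℓ ∈ Finset.range (L + 1),
        ((⌈Marg ℓ⌉₊ : ℕ) : ℝ) * c₃ * (2:ℝ) ^ (β * (ℓ:ℝ))
          ≤ 2 * c₂ * c₃ * ((L:ℝ) + 1) / t ^ 2 + c₃ * (2:ℝ) ^ (β * (L:ℝ)) := by
      intro ℓ hℓ
      have hℓL : (ℓ:ℝ) ≤ (L:ℝ) := by
        have := Finset.mem_range.mp hℓ
        exact_mod_cast Nat.lt_succ_iff.mp this
      have hp : (0:ℝ) < (2:ℝ) ^ (β * (ℓ:ℝ)) := Real.rpow_pos_of_pos two_pos _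
      have hceil : ((⌈Marg ℓ⌉₊ : ℕ) : ℝ) ≤ Marg ℓ + 1 :=
        le_of_lt (Nat.ceil_lt_add_one (hMargpos ℓ).le)
      have hkey : (2:ℝ) ^ (-(β * (ℓ:ℝ))) * (2:ℝ) ^ (β * (ℓ:ℝ)) = 1 := by
        rw [← Real.rpow_add two_pos]
        norm_num
      have heq : (Marg ℓ + 1) * c₃ * (2:ℝ) ^ (β * (ℓ:ℝ))
          = 2 * c₂ * c₃ * ((L:ℝ) + 1) / t ^ 2 + c₃ * (2:ℝ) ^ (β * (ℓ:ℝ)) := by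
        rw [hMargdef]
        field_simp
        linear_combination 2 * c₂ * ((L:ℝ) + 1) * hkey
      have hmono : (2:ℝ) ^ (β * (ℓ:ℝ)) ≤ (2:ℝ) ^ (β * (L:ℝ)) :=
        Real.rpow_le_rpow_of_exponent_le one_le_two (by nlinarith)
      calc ((⌈Marg ℓ⌉₊ : ℕ) : ℝ) * c₃ * (2:ℝ) ^ (β * (ℓ:ℝ))
          ≤ (Marg ℓ + 1) * c₃ * (2:ℝ) ^ (β * (ℓ:ℝ)) := by
            apply mul_le_mul_of_nonneg_right (mul_le_mul_of_nonneg_right hceil hc₃.le) hp.le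
        _ = 2 * c₂ * c₃ * ((L:ℝ) + 1) / t ^ 2 + c₃ * (2:ℝ) ^ (β * (ℓ:ℝ)) := heq
        _ ≤ 2 * c₂ * c₃ * ((L:ℝ) + 1) / t ^ 2 + c₃ * (2:ℝ) ^ (β * (L:ℝ)) := by
            nlinarith [hmono]
    have hsum : ∑ ℓ ∈ Finset.range (L + 1),
        ((⌈Marg ℓ⌉₊ : ℕ) : ℝ) * c₃ * (2:ℝ) ^ (β * (ℓ:ℝ))
          ≤ ((L:ℝ) + 1) * (2 * c₂ * c₃ * ((L:ℝ) + 1) / t ^ 2 + c₃ * (2:ℝ) ^ (β * (L:ℝ))) := by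
      calc ∑ ℓ ∈ Finset.range (L + 1), ((⌈Marg ℓ⌉₊ : ℕ) : ℝ) * c₃ * (2:ℝ) ^ (β * (ℓ:ℝ))
          ≤ ∑ _ℓ ∈ Finset.range (L + 1),
              (2 * c₂ * c₃ * ((L:ℝ) + 1) / t ^ 2 + c₃ * (2:ℝ) ^ (β * (L:ℝ))) :=
            Finset.sum_le_sum hterm
        _ = ((L:ℝ) + 1) * (2 * c₂ * c₃ * ((L:ℝ) + 1) / t ^ 2 + c₃ * (2:ℝ) ^ (β * (L:ℝ))) := by
            rw [Finset.sum_const, Finset.card_range]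
            push_cast; ring
    have hrhs : ((L:ℝ) + 1) * (2 * c₂ * c₃ * ((L:ℝ) + 1) / t ^ 2 + c₃ * (2:ℝ) ^ (β * (L:ℝ)))
        ≤ (2*c₂*c₃*A^2 + c₃*A*B) * U ^ 2 / t ^ 2 := by
      have hLpos : (0:ℝ) ≤ (L:ℝ) + 1 := by positivity
      have ht2 : (0:ℝ) < t ^ 2 := by positivity
      have h1 : ((L:ℝ) + 1) * (2 * c₂ * c₃ * ((L:ℝ) + 1) / t ^ 2)
          ≤ 2 * c₂ * c₃ * A ^ 2 * U ^ 2 / t ^ 2 := by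
        calc ((L:ℝ) + 1) * (2 * c₂ * c₃ * ((L:ℝ) + 1) / t ^ 2)
            = 2 * c₂ * c₃ * (((L:ℝ) + 1) * ((L:ℝ) + 1)) / t ^ 2 := by ring
          _ ≤ 2 * c₂ * c₃ * ((A * U) * (A * U)) / t ^ 2 := by gcongr
          _ = 2 * c₂ * c₃ * A ^ 2 * U ^ 2 / t ^ 2 := by ring
      have h2 : ((L:ℝ) + 1) * (c₃ * (2:ℝ) ^ (β * (L:ℝ)))
          ≤ c₃ * A * B * U ^ 2 / t ^ 2 := by
        have hBt : (0:ℝ) < B / t := by positivity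
        have step : ((L:ℝ) + 1) * (c₃ * (2:ℝ) ^ (β * (L:ℝ))) ≤ (A * U) * (c₃ * (B / t)) := by
          apply mul_le_mul hL1 (mul_le_mul_of_nonneg_left h2L hc₃.le) (by positivity) (by positivity)
        have step2 : (A * U) * (c₃ * (B / t)) ≤ c₃ * A * B * U ^ 2 / t ^ 2 := by
          have e1 : (A * U) * (c₃ * (B / t)) = c₃ * A * B * U / t := by ring
          have e2 : c₃ * A * B * U ^ 2 / t ^ 2 = (c₃ * A * B * U / t) * (U / t) := by ring
          have h3 : (1:ℝ) ≤ U / t := by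
            rw [le_div_iff₀ ht]; linarith
          have hx : (0:ℝ) < c₃ * A * B * U / t := by positivity
          rw [e1, e2]
          exact le_mul_of_one_le_right hx.le h3
        linarith
      have hexpand : ((L:ℝ) + 1) * (2 * c₂ * c₃ * ((L:ℝ) + 1) / t ^ 2 + c₃ * (2:ℝ) ^ (β * (L:ℝ)))
          = ((L:ℝ) + 1) * (2 * c₂ * c₃ * ((L:ℝ) + 1) / t ^ 2)
            + ((L:ℝ) + 1) * (c₃ * (2:ℝ) ^ (β * (L:ℝ))) := by ring
      have hsplit : (2*c₂*c₃*A^2 + c₃*A*B) * U ^ 2 / t ^ 2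
          = 2 * c₂ * c₃ * A ^ 2 * U ^ 2 / t ^ 2 + c₃ * A * B * U ^ 2 / t ^ 2 := by ring
      rw [hexpand, hsplit]
      linarith
    have hfinal : (2*c₂*c₃*A^2 + c₃*A*B) * U ^ 2 / t ^ 2
        = (2*c₂*c₃*A^2 + c₃*A*B) * t ^ (-2:ℝ) * (Real.log t) ^ 2 := by
      have h1 : t ^ (-2:ℝ) = (t ^ 2)⁻¹ := by
        rw [show (-2:ℝ) = -(2:ℕ) by norm_num, Real.rpow_neg ht.le, Real.rpow_natCast]
      have h2 : (Real.log t) ^ 2 = U ^ 2 := by rw [hUdef]; ring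
      rw [h1, h2]; ring
    rw [← hfinal]
    linarith [hsum, hrhs]
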